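/- Let (u₁,u₂) be a positive solution of the coupled Gross–Pitaevskii system with coefficients λ₁,ε, λ₂,ε > 0. For i,j = 1,2 with j ≠ i define α_i = 1/λ_{i,ε} + √( 1/λ_{i,ε}² + (1/ε²)(1 + g λ_{j,ε}/(g_j λ_{i,ε})) ), and for s ≥ r > √(λ_{i,ε}) set w_i(s) = (min_{∂B_r} u_i) · exp( −(α_i/2)(s² − r²) ). Then u_i(x) ≥ w_i(|x|) for all |x| ≥ r > √(λ_{i,ε}), i = 1,2. -/

import Mathlib

open MeasureTheory Filter
open scoped Real Topology

noncomputable section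

abbrev Pt := EuclideanSpace ℝ (Fin 2)

/-- The Laplacian, written as the sum of second directional derivatives along
the coordinate axes. -/
def lapR (f : Pt → ℝ) (x : Pt) : ℝ :=
  ∑ i : Fin 2, iteratedDeriv 2 (fun t : ℝ => f (x + t • EuclideanSpace.single i (1:ℝ))) 0

/-- `(η₁, η₂)` solves the coupled Gross–Pitaevskii system with coefficients
`lam₁, lam₂`, including the decay at infinity. -/
def GPSolution (g₁ g₂ g ε lam₁ lam₂ : ℝ) (η₁ η₂ : Pt → ℝ) : Prop :=
  ContDiff ℝ (⊤ : ℕ∞) η₁ ∧ ContDiff ℝ (⊤ : ℕ∞) η₂ ∧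
  (∀ x : Pt, -ε ^ 2 * lapR η₁ x + ‖x‖ ^ 2 * η₁ x + g₁ * η₁ x ^ 3
      + g * η₁ x * η₂ x ^ 2 = lam₁ * η₁ x) ∧
  (∀ x : Pt, -ε ^ 2 * lapR η₂ x + ‖x‖ ^ 2 * η₂ x + g₂ * η₂ x ^ 3
      + g * η₁ x ^ 2 * η₂ x = lam₂ * η₂ x) ∧
  Tendsto η₁ (cocompact Pt) (𝓝 0) ∧ Tendsto η₂ (cocompact Pt) (𝓝 0)

/-- A positive solution of the coupled Gross–Pitaevskii system. -/
def GPPositiveSolution (g₁ g₂ g ε lam₁ lam₂ : ℝ) (η₁ η₂ : Pt → ℝ) : Prop :=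
  GPSolution g₁ g₂ g ε lam₁ lam₂ η₁ η₂ ∧ (∀ x, 0 < η₁ x) ∧ (∀ x, 0 < η₂ x)

set_option maxHeartbeats 1000000

lemma deriv2_nonpos_of_isLocalMax {f : ℝ → ℝ} (hf : ContDiff ℝ 2 f) {a : ℝ}
    (h : IsLocalMax f a) : deriv (deriv f) a ≤ 0 := by
  by_contra hpos
  push_neg at hpos
  have hf1 : ContDiff ℝ 1 (deriv f) := ((contDiff_succ_iff_deriv (n := 1)).mp hf).2.2
  have hdf : Differentiable ℝ f := ((contDiff_succ_iff_deriv (n := 1)).mp hf).1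
  have hddf : Differentiable ℝ (deriv f) := ((contDiff_succ_iff_deriv (n := 0)).mp hf1).1
  have hcont : Continuous (deriv (deriv f)) :=
    (((contDiff_succ_iff_deriv (n := 0)).mp hf1).2.2).continuous
  have hd0 : deriv f a = 0 := h.deriv_eq_zero
  obtain ⟨δ, hδ, hball⟩ := Metric.eventually_nhds_iff.mp
    ((hcont.continuousAt (x := a)).eventually (eventually_gt_nhds hpos))
  -- deriv f is strictly monotone on ball a δ
  have hmono : StrictMonoOn (deriv f) (Metric.ball a δ) := by
    apply strictMonoOn_of_deriv_pos (convex_ball a δ) (hddf.continuous.continuousOn)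
    intro t ht
    rw [interior_eq_iff_isOpen.mpr Metric.isOpen_ball] at ht
    exact hball (by simpa [Real.dist_eq] using ht)
  -- f is strictly monotone on [a, a + δ/2]
  have hmono2 : StrictMonoOn f (Set.Icc a (a + δ/2)) := by
    apply strictMonoOn_of_deriv_pos (convex_Icc _ _) (hdf.continuous.continuousOn)
    intro t ht
    rw [interior_Icc] at ht
    have h1 : t ∈ Metric.ball a δ := by
      rw [Metric.mem_ball, Real.dist_eq, abs_of_nonneg (by linarith [ht.1])]
      linarith [ht.1, ht.2]
    have h2 : a ∈ Metric.ball a δ := Metric.mem_ball_self hδ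
    have := hmono h2 h1 ht.1
    rwa [hd0] at this
  -- contradiction with local max
  obtain ⟨η, hη, hmax⟩ := Metric.eventually_nhds_iff.mp h
  set b := a + min (δ/2) η / 2 with hb
  have hmin : 0 < min (δ/2) η := lt_min (by linarith) hη
  have hle1 : min (δ/2) η ≤ δ/2 := min_le_left _ _
  have hle2 : min (δ/2) η ≤ η := min_le_right _ _
  have hab : a < b := by rw [hb]; linarith
  have h1 : f a < f b := hmono2 (Set.mem_Icc.mpr ⟨le_refl _, by linarith⟩)
    (Set.mem_Icc.mpr ⟨le_of_lt hab, by rw [hb]; linarith⟩) hab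
  have h2 : f b ≤ f a := hmax (by
    rw [Real.dist_eq, hb]
    simp only [add_sub_cancel_left]
    rw [abs_of_nonneg (by linarith)]
    linarith)
  linarith

lemma curve_contDiff (x : Pt) (i : Fin 2) :
    ContDiff ℝ (⊤ : ℕ∞) (fun t : ℝ => x + t • EuclideanSpace.single i (1:ℝ)) :=
  contDiff_const.add (contDiff_id.smul contDiff_const)

lemma iteratedDeriv_two_eq {f : ℝ → ℝ} : iteratedDeriv 2 f = deriv (deriv f) := by
  rw [show (2:ℕ) = 1 + 1 from rfl, iteratedDeriv_succ, iteratedDeriv_one]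

lemma lapR_nonpos_of_isLocalMax {f : Pt → ℝ} (hf : ContDiff ℝ (⊤:ℕ∞) f) {x : Pt}
    (h : IsLocalMax f x) : lapR f x ≤ 0 := by
  apply Finset.sum_nonpos
  intro i _
  set γ : ℝ → Pt := fun t => x + t • EuclideanSpace.single i (1:ℝ) with hγdef
  have hγ := curve_contDiff x i
  have h2 : ContDiff ℝ 2 (fun t => f (γ t)) := (hf.comp hγ).of_le (WithTop.coe_le_coe.mpr le_top)
  have hγ0 : γ 0 = x := by simp [hγdef]
  have hmax : IsLocalMax (fun t => f (γ t)) 0 := by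
    have ht : Tendsto γ (𝓝 0) (𝓝 x) := by
      rw [← hγ0]; exact hγ.continuous.continuousAt
    have := ht.eventually h
    filter_upwards [this] with t htt
    simpa [hγ0] using htt
  rw [iteratedDeriv_two_eq]
  exact deriv2_nonpos_of_isLocalMax h2 hmax

lemma lapR_sub {w u : Pt → ℝ} (hw : ContDiff ℝ (⊤:ℕ∞) w) (hu : ContDiff ℝ (⊤:ℕ∞) u)
    (x : Pt) : lapR (fun y => w y - u y) x = lapR w x - lapR u x := by
  unfold lapR
  rw [← Finset.sum_sub_distrib]
  apply Finset.sum_congr rfl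
  intro i _
  have hγ := curve_contDiff x i
  have h1 : ContDiff ℝ 2 (fun t : ℝ => w (x + t • EuclideanSpace.single i (1:ℝ))) :=
    (hw.comp hγ).of_le (WithTop.coe_le_coe.mpr le_top)
  have h2 : ContDiff ℝ 2 (fun t : ℝ => u (x + t • EuclideanSpace.single i (1:ℝ))) :=
    (hu.comp hγ).of_le (WithTop.coe_le_coe.mpr le_top)
  simp only [← iteratedDerivWithin_univ]
  exact iteratedDerivWithin_sub (Set.mem_univ 0) uniqueDiffOn_univ
    h1.contDiffAt.contDiffWithinAt h2.contDiffAt.contDiffWithinAt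

lemma exists_max_of_decay {f : Pt → ℝ} (hf : Continuous f)
    (hdec : Tendsto f (cocompact Pt) (𝓝 0))
    {S : Set Pt} (hS : IsClosed S) {x : Pt} (hx : x ∈ S) (hfx : 0 < f x) :
    ∃ x₀ ∈ S, IsMaxOn f S x₀ := by
  have hmem : f ⁻¹' Set.Iio (f x) ∈ cocompact Pt := hdec (Iio_mem_nhds hfx)
  obtain ⟨K, hK, hKsub⟩ := mem_cocompact.mp hmem
  set C := S ∩ (K ∪ {x}) with hC
  have hCc : IsCompact C := (hK.union isCompact_singleton).inter_left hS
  have hxC : x ∈ C := ⟨hx, Or.inr rfl⟩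
  obtain ⟨x₀, hx₀C, hmax⟩ := hCc.exists_isMaxOn ⟨x, hxC⟩ hf.continuousOn
  refine ⟨x₀, hx₀C.1, fun y hy => ?_⟩
  by_cases hyK : y ∈ K ∪ {x}
  · exact hmax ⟨hy, hyK⟩
  · have hyn : y ∉ K := fun h => hyK (Or.inl h)
    have : f y < f x := hKsub hyn
    have : f x ≤ f x₀ := hmax hxC
    simp only [Set.mem_setOf_eq]
    linarith

lemma apriori_bound {u G : Pt → ℝ} {ε a lam : ℝ}
    (hu : ContDiff ℝ (⊤:ℕ∞) u) (hpos : ∀ x, 0 < u x)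
    (hdec : Tendsto u (cocompact Pt) (𝓝 0))
    (ha : 0 ≤ a) (hG : ∀ x, 0 ≤ G x)
    (heq : ∀ x : Pt, -ε^2 * lapR u x + ‖x‖^2 * u x + a * u x^3 + G x * u x = lam * u x) :
    ∀ x : Pt, a * u x ^ 2 ≤ lam := by
  intro x
  obtain ⟨x₀, -, hmax⟩ := exists_max_of_decay hu.continuous hdec isClosed_univ
    (Set.mem_univ x) (hpos x)
  have hloc : IsLocalMax u x₀ := hmax.isLocalMax Filter.univ_mem
  have hlap : lapR u x₀ ≤ 0 := lapR_nonpos_of_isLocalMax hu hloc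
  have hx₀ := heq x₀
  have hu₀ : 0 < u x₀ := hpos x₀
  have hb : a * u x₀ ^ 2 ≤ lam := by
    have h1 : 0 ≤ -ε^2 * lapR u x₀ := by nlinarith [sq_nonneg ε]
    nlinarith [hG x₀, sq_nonneg ‖x₀‖, hu₀]
  have hle : u x ≤ u x₀ := hmax (Set.mem_univ x)
  have : u x ^ 2 ≤ u x₀ ^ 2 := by nlinarith [hpos x]
  nlinarith [mul_le_mul_of_nonneg_left this ha]

lemma norm_sq_sum (x : Pt) : ‖x‖^2 = ∑ i : Fin 2, x i ^ 2 := by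
  rw [EuclideanSpace.norm_eq, Real.sq_sqrt (by positivity)]
  simp [sq_abs]

lemma norm_add_single (x : Pt) (i : Fin 2) (t : ℝ) :
    ‖x + t • EuclideanSpace.single i (1:ℝ)‖^2 = ‖x‖^2 + 2*t*(x i) + t^2 := by
  rw [norm_add_sq_real, real_inner_smul_right, norm_smul]
  have h1 : (inner ℝ x (EuclideanSpace.single i (1:ℝ)) : ℝ) = x i := by
    rw [EuclideanSpace.inner_single_right]; simp
  rw [h1, EuclideanSpace.norm_single]
  simp [mul_pow]
  ring


lemma lapR_gauss (m α r : ℝ) (x : Pt) :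
    lapR (fun y => m * Real.exp (-(α/2) * (‖y‖^2 - r^2))) x
      = (α^2*‖x‖^2 - 2*α) * (m * Real.exp (-(α/2) * (‖x‖^2 - r^2))) := by
  have key : ∀ i : Fin 2,
      iteratedDeriv 2 (fun t : ℝ =>
        m * Real.exp (-(α/2) * (‖x + t • EuclideanSpace.single i (1:ℝ)‖^2 - r^2))) 0
      = (α^2 * (x i)^2 - α) * (m * Real.exp (-(α/2) * (‖x‖^2 - r^2))) := by
    intro i
    set p : ℝ → ℝ := fun t => -(α/2) * (‖x‖^2 + 2*t*(x i) + t^2 - r^2) with hp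
    have hfun : (fun t : ℝ =>
        m * Real.exp (-(α/2) * (‖x + t • EuclideanSpace.single i (1:ℝ)‖^2 - r^2)))
        = fun t => m * Real.exp (p t) := by
      funext t; rw [norm_add_single]
    rw [hfun, iteratedDeriv_two_eq]
    have hp' : ∀ t : ℝ, HasDerivAt p (-α * (x i + t)) t := by
      intro t
      have : HasDerivAt (fun t : ℝ => ‖x‖^2 + 2*t*(x i) + t^2 - r^2) (2*(x i) + 2*t) t := by
        have h1 : HasDerivAt (fun t : ℝ => 2*t*(x i)) (2*(x i)) t := by
          simpa using ((hasDerivAt_id t).const_mul 2).mul_const (x i)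
        have h2 : HasDerivAt (fun t : ℝ => t^2) (2*t) t := by
          simpa using hasDerivAt_pow 2 t
        simpa using ((h1.const_add (‖x‖^2)).add h2).sub_const (r^2)
      have := this.const_mul (-(α/2))
      rw [show -α * (x i + t) = -(α/2) * (2*(x i) + 2*t) by ring]
      exact this
    have hq : ∀ t : ℝ, HasDerivAt (fun s => m * Real.exp (p s))
        (m * (Real.exp (p t) * (-α * (x i + t)))) t := by
      intro t
      exact ((hp' t).exp).const_mul m
    have hd1 : deriv (fun s => m * Real.exp (p s))
        = fun t => m * (Real.exp (p t) * (-α * (x i + t))) := by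
      funext t; exact (hq t).deriv
    rw [hd1]
    have hq2 : HasDerivAt (fun t => m * (Real.exp (p t) * (-α * (x i + t))))
        (m * (Real.exp (p 0) * (-α * (x i + 0)) * (-α * (x i + 0)) + Real.exp (p 0) * (-α))) 0 := by
      have he : HasDerivAt (fun t => Real.exp (p t)) (Real.exp (p 0) * (-α * (x i + 0))) 0 :=
        (hp' 0).exp
      have hl : HasDerivAt (fun t : ℝ => -α * (x i + t)) (-α) 0 := by
        simpa using ((hasDerivAt_id (0:ℝ)).const_add (x i)).const_mul (-α)
      exact (he.mul hl).const_mul m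
    rw [hq2.deriv]
    have hp0 : p 0 = -(α/2) * (‖x‖^2 - r^2) := by rw [hp]; ring_nf
    rw [hp0]
    ring
  unfold lapR
  rw [Finset.sum_congr rfl (fun i _ => key i)]
  rw [← Finset.sum_mul]
  have hs : ∑ i : Fin 2, (α^2 * x i^2 - α) = α^2*‖x‖^2 - 2*α := by
    rw [Finset.sum_sub_distrib, ← Finset.mul_sum, ← norm_sq_sum]
    simp [two_mul]
  rw [hs]

lemma barrier_main {u G : Pt → ℝ} {ε a lam B α : ℝ}
    (hu : ContDiff ℝ (⊤:ℕ∞) u) (hpos : ∀ x, 0 < u x)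
    (hdec : Tendsto u (cocompact Pt) (𝓝 0))
    (hε : 0 < ε) (hlam : 0 < lam) (ha : 0 ≤ a) (hG : ∀ x, 0 ≤ G x) (hB : 0 ≤ B)
    (heq : ∀ x : Pt, -ε^2 * lapR u x + ‖x‖^2 * u x + a * u x^3 + G x * u x = lam * u x)
    (hbound : ∀ x : Pt, a * u x ^ 2 + G x ≤ lam + B)
    (hα : α = 1/lam + Real.sqrt (1/lam^2 + 1/ε^2 * (1 + B/lam))) :
    ∀ r : ℝ, Real.sqrt lam < r → ∀ x : Pt, r ≤ ‖x‖ →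
      sInf (u '' Metric.sphere (0 : Pt) r) * Real.exp (-(α/2) * (‖x‖^2 - r^2)) ≤ u x := by
  intro r hr
  have hr0 : 0 < r := lt_of_le_of_lt (Real.sqrt_nonneg lam) hr
  have hlamr : lam < r^2 := by
    nlinarith [Real.sq_sqrt hlam.le, Real.sqrt_nonneg lam]
  -- α facts
  have hαpos : 0 < α := by
    rw [hα]; positivity
  have hα2 : ε^2 * α^2 = 2 * ε^2 * α / lam + 1 + B / lam := by
    have h1 : α - 1/lam = Real.sqrt (1/lam^2 + 1/ε^2 * (1 + B/lam)) := by rw [hα]; ring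
    have h2 : (α - 1/lam)^2 = 1/lam^2 + 1/ε^2 * (1 + B/lam) := by
      rw [h1, Real.sq_sqrt (by positivity)]
    have h2' : α^2 = 2*α/lam + 1/ε^2*(1+B/lam) := by linear_combination h2
    have hinv : ε^2 * (1/ε^2) = 1 := by field_simp
    linear_combination ε^2 * h2' + (1 + B/lam) * hinv
  have key : ∀ s : ℝ, lam ≤ s^2 → s^2 + B ≤ ε^2 * (α^2 * s^2 - 2*α) := by
    intro s hs
    have h3 : ε^2 * α^2 * s^2 = (2 * ε^2 * α / lam + 1 + B / lam) * s^2 := by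
      rw [← hα2]
    have h4 : 2 * ε^2 * α / lam * s^2 ≥ 2 * ε^2 * α := by
      rw [ge_iff_le, div_mul_eq_mul_div, le_div_iff₀ hlam]
      nlinarith [mul_nonneg (mul_nonneg (by positivity : (0:ℝ) ≤ 2*ε^2) hαpos.le)
        (by linarith : (0:ℝ) ≤ s^2 - lam)]
    have h5 : B / lam * s^2 ≥ B := by
      rw [ge_iff_le, div_mul_eq_mul_div, le_div_iff₀ hlam]
      nlinarith [mul_nonneg hB (by linarith : (0:ℝ) ≤ s^2 - lam)]
    nlinarith
  -- sphere infimum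
  set m := sInf (u '' Metric.sphere (0 : Pt) r) with hm
  have hsne : (Metric.sphere (0 : Pt) r).Nonempty :=
    NormedSpace.sphere_nonempty.mpr hr0.le
  have himg : IsCompact (u '' Metric.sphere (0 : Pt) r) :=
    (isCompact_sphere 0 r).image hu.continuous
  have himgne : (u '' Metric.sphere (0 : Pt) r).Nonempty := hsne.image u
  have hmmem : m ∈ u '' Metric.sphere (0 : Pt) r := himg.sInf_mem himgne
  have hmpos : 0 < m := by
    obtain ⟨y, -, hy⟩ := hmmem
    rw [← hy]; exact hpos y
  have hmle : ∀ y ∈ Metric.sphere (0 : Pt) r, m ≤ u y := fun y hy =>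
    csInf_le himg.bddBelow (Set.mem_image_of_mem u hy)
  -- barrier function
  set w : Pt → ℝ := fun y => m * Real.exp (-(α/2) * (‖y‖^2 - r^2)) with hw
  have hwsmooth : ContDiff ℝ (⊤:ℕ∞) w := by
    apply contDiff_const.mul
    exact Real.contDiff_exp.comp
      (contDiff_const.mul ((contDiff_norm_sq ℝ).sub contDiff_const))
  have hwpos : ∀ y, 0 < w y := fun y => by positivity
  -- decay of w
  have hwdec : Tendsto w (cocompact Pt) (𝓝 0) := by
    have h1 : Tendsto (fun y : Pt => ‖y‖) (cocompact Pt) atTop :=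
      tendsto_norm_cocompact_atTop
    have h2 : Tendsto (fun s : ℝ => s^2 - r^2) atTop atTop :=
      tendsto_atTop_add_const_right atTop (-r^2) (tendsto_pow_atTop two_ne_zero)
    have h3 : Tendsto (fun s : ℝ => -(α/2) * (s^2 - r^2)) atTop atBot :=
      h2.const_mul_atTop_of_neg (by linarith)
    have h4 : Tendsto (fun s : ℝ => m * Real.exp (-(α/2) * (s^2 - r^2))) atTop (𝓝 0) := by
      have := (Real.tendsto_exp_atBot.comp h3).const_mul m
      simpa using this
    exact h4.comp h1
  -- main claim
  intro x hx
  by_contra hcon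
  push_neg at hcon
  -- apply max principle to f = w - u on S
  set S : Set Pt := {y | r ≤ ‖y‖} with hS
  have hSclosed : IsClosed S := isClosed_le continuous_const continuous_norm
  have hfdec : Tendsto (fun y => w y - u y) (cocompact Pt) (𝓝 0) := by
    simpa using hwdec.sub hdec
  have hwx : u x < w x := hcon
  obtain ⟨x₀, hx₀S, hmax⟩ := exists_max_of_decay (hwsmooth.continuous.sub hu.continuous)
    hfdec hSclosed (show x ∈ S from hx) (sub_pos.mpr hwx)
  have hfx₀ : 0 < w x₀ - u x₀ := lt_of_lt_of_le (sub_pos.mpr hwx) (hmax (show x ∈ S from hx))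
  -- x₀ is not on the sphere
  have hx₀gt : r < ‖x₀‖ := by
    rcases lt_or_eq_of_le (show r ≤ ‖x₀‖ from hx₀S) with h | h
    · exact h
    · exfalso
      have hsph : x₀ ∈ Metric.sphere (0 : Pt) r := by
        rw [Metric.mem_sphere, dist_zero_right]; exact h.symm
      have h1 : w x₀ = m := by
        show m * Real.exp (-(α/2) * (‖x₀‖^2 - r^2)) = m
        rw [← h]; simp
      have := hmle x₀ hsph
      rw [h1] at hfx₀
      linarith
  -- local max
  have hloc : IsLocalMax (fun y => w y - u y) x₀ := by
    have hopen : IsOpen {y : Pt | r < ‖y‖} := isOpen_lt continuous_const continuous_norm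
    have hmem : {y : Pt | r < ‖y‖} ∈ 𝓝 x₀ := hopen.mem_nhds hx₀gt
    filter_upwards [hmem] with y hy
    exact hmax (le_of_lt hy)
  have hlap : lapR (fun y => w y - u y) x₀ ≤ 0 :=
    lapR_nonpos_of_isLocalMax (hwsmooth.sub hu) hloc
  rw [lapR_sub hwsmooth hu] at hlap
  -- compute ε² lapR u x₀ from the equation
  have hequ := heq x₀
  have hlapu : ε^2 * lapR u x₀ = (‖x₀‖^2 - lam + a * u x₀^2 + G x₀) * u x₀ := by
    linear_combination -hequ
  -- lapR w
  have hwx₀ : w x₀ = m * Real.exp (-(α/2) * (‖x₀‖^2 - r^2)) := rfl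
  have hlapw : ε^2 * lapR w x₀ = ε^2 * (α^2*‖x₀‖^2 - 2*α) * w x₀ := by
    rw [hw, lapR_gauss m α r x₀, ← hwx₀]; ring
  -- the contradiction
  set c := ‖x₀‖^2 - lam + a * u x₀^2 + G x₀ with hc
  have hcpos : 0 < c := by
    have h1 : lam < ‖x₀‖^2 := by nlinarith [hx₀gt, hr0]
    nlinarith [hG x₀, mul_nonneg ha (sq_nonneg (u x₀))]
  have hcle : c ≤ ‖x₀‖^2 + B := by
    have := hbound x₀
    rw [hc]; linarith
  have hkey := key ‖x₀‖ (by nlinarith [hx₀gt, hr0])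
  have hfinal : 0 < ε^2 * (lapR w x₀ - lapR u x₀) := by
    have h1 : ε^2 * lapR w x₀ ≥ c * w x₀ := by
      rw [hlapw]
      have : c * w x₀ ≤ (‖x₀‖^2 + B) * w x₀ :=
        mul_le_mul_of_nonneg_right hcle (hwpos x₀).le
      have h2 : (‖x₀‖^2 + B) * w x₀ ≤ ε^2 * (α^2*‖x₀‖^2 - 2*α) * w x₀ :=
        mul_le_mul_of_nonneg_right hkey (hwpos x₀).le
      linarith
    have h2 : ε^2 * lapR u x₀ = c * u x₀ := hlapu
    have h3 : c * w x₀ - c * u x₀ = c * (w x₀ - u x₀) := by ring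
    nlinarith [mul_pos hcpos hfx₀]
  have : ε^2 * (lapR w x₀ - lapR u x₀) ≤ 0 :=
    mul_nonpos_of_nonneg_of_nonpos (sq_nonneg ε) hlap
  linarith

/-- Gaussian lower barriers for positive solutions of the
coupled Gross–Pitaevskii system. -/
theorem bound_from_below
    (g₁ g₂ g ε lam₁ lam₂ : ℝ)
    (hg₁ : 0 < g₁) (hg₂ : 0 < g₂) (hg : 0 < g) (hε : 0 < ε)
    (hlam₁ : 0 < lam₁) (hlam₂ : 0 < lam₂)
    (u₁ u₂ : Pt → ℝ) (hu : GPPositiveSolution g₁ g₂ g ε lam₁ lam₂ u₁ u₂) :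
    (∀ r : ℝ, Real.sqrt lam₁ < r → ∀ x : Pt, r ≤ ‖x‖ →
        sInf (u₁ '' Metric.sphere (0 : Pt) r) *
          Real.exp (-((1 / lam₁ + Real.sqrt (1 / lam₁ ^ 2
              + 1 / ε ^ 2 * (1 + g * lam₂ / (g₂ * lam₁)))) / 2)
            * (‖x‖ ^ 2 - r ^ 2)) ≤ u₁ x) ∧
    (∀ r : ℝ, Real.sqrt lam₂ < r → ∀ x : Pt, r ≤ ‖x‖ →
        sInf (u₂ '' Metric.sphere (0 : Pt) r) *
          Real.exp (-((1 / lam₂ + Real.sqrt (1 / lam₂ ^ 2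
              + 1 / ε ^ 2 * (1 + g * lam₁ / (g₁ * lam₂)))) / 2)
            * (‖x‖ ^ 2 - r ^ 2)) ≤ u₂ x) := by
  obtain ⟨⟨hs1, hs2, heq1, heq2, hdec1, hdec2⟩, hpos1, hpos2⟩ := hu
  -- a priori bounds
  have hb1 : ∀ x : Pt, g₁ * u₁ x ^ 2 ≤ lam₁ := by
    apply apriori_bound (ε := ε) (G := fun x => g * u₂ x ^ 2) hs1 hpos1 hdec1 hg₁.le
      (fun x => by positivity)
    intro x
    linear_combination heq1 x
  have hb2 : ∀ x : Pt, g₂ * u₂ x ^ 2 ≤ lam₂ := by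
    apply apriori_bound (ε := ε) (G := fun x => g * u₁ x ^ 2) hs2 hpos2 hdec2 hg₂.le
      (fun x => by positivity)
    intro x
    linear_combination heq2 x
  constructor
  · intro r hr x hx
    have hα : (1 / lam₁ + Real.sqrt (1 / lam₁ ^ 2
        + 1 / ε ^ 2 * (1 + g * lam₂ / (g₂ * lam₁))))
        = 1/lam₁ + Real.sqrt (1/lam₁^2 + 1/ε^2 * (1 + (g * lam₂ / g₂)/lam₁)) := by
      rw [div_div]
    rw [hα]
    apply barrier_main (G := fun x => g * u₂ x ^ 2) (B := g * lam₂ / g₂)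
      hs1 hpos1 hdec1 hε hlam₁ hg₁.le (fun x => by positivity) (by positivity)
      (fun x => by linear_combination heq1 x) ?_ rfl r hr x hx
    intro x
    have h1 := hb1 x
    have h2 := hb2 x
    have h3 : g * u₂ x ^ 2 ≤ g * lam₂ / g₂ := by
      rw [le_div_iff₀ hg₂]
      nlinarith [mul_le_mul_of_nonneg_left (hb2 x) hg.le]
    linarith
  · intro r hr x hx
    have hα : (1 / lam₂ + Real.sqrt (1 / lam₂ ^ 2
        + 1 / ε ^ 2 * (1 + g * lam₁ / (g₁ * lam₂))))
        = 1/lam₂ + Real.sqrt (1/lam₂^2 + 1/ε^2 * (1 + (g * lam₁ / g₁)/lam₂)) := by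
      rw [div_div]
    rw [hα]
    apply barrier_main (G := fun x => g * u₁ x ^ 2) (B := g * lam₁ / g₁)
      hs2 hpos2 hdec2 hε hlam₂ hg₂.le (fun x => by positivity) (by positivity)
      (fun x => by linear_combination heq2 x) ?_ rfl r hr x hx
    intro x
    have h3 : g * u₁ x ^ 2 ≤ g * lam₁ / g₁ := by
      rw [le_div_iff₀ hg₁]
      nlinarith [mul_le_mul_of_nonneg_left (hb1 x) hg.le]
    linarith [hb2 x]
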